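/- Suppose Pre(N,a) is nonsingular for some N ≥ 2. Then the polynomial f_c^N(0) - a ∈ K[c] is separable, i.e., it has exactly 2^{N-1} distinct roots c ∈ K. -/

import Mathlib

open MvPolynomial


noncomputable def Pn (K : Type*) [Field K] (N : ℕ) : Polynomial K :=
  (fun p : Polynomial K => p ^ 2 + Polynomial.X)^[N] 0

noncomputable def Fn (K : Type*) [Field K] (N : ℕ) : MvPolynomial (Fin 2) K :=
  (fun p : MvPolynomial (Fin 2) K => p ^ 2 + X 1)^[N] (X 0)

lemma evalA (K : Type*) [Field K] (N : ℕ) (c : K) :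
    Polynomial.eval c (Pn K N) = MvPolynomial.eval ![(0:K), c] (Fn K N) := by
  induction N with
  | zero => simp [Pn, Fn]
  | succ n ih =>
    simp only [Pn, Fn, Function.iterate_succ_apply'] at *
    simp [ih]

lemma evalB (K : Type*) [Field K] (N : ℕ) (c : K) :
    Polynomial.eval c (Polynomial.derivative (Pn K N)) =
      MvPolynomial.eval ![(0:K), c] (pderiv 1 (Fn K N)) := by
  induction N with
  | zero => simp [Pn, Fn]
  | succ n ih =>
    simp only [Pn, Fn, Function.iterate_succ_apply'] at *
    rw [show ((fun p : Polynomial K => p ^ 2 + Polynomial.X)^[n] 0) ^ 2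
        = ((fun p : Polynomial K => p ^ 2 + Polynomial.X)^[n] 0) *
          ((fun p : Polynomial K => p ^ 2 + Polynomial.X)^[n] 0) from sq _,
      show ((fun p : MvPolynomial (Fin 2) K => p ^ 2 + X 1)^[n] (X 0)) ^ 2
        = ((fun p : MvPolynomial (Fin 2) K => p ^ 2 + X 1)^[n] (X 0)) *
          ((fun p : MvPolynomial (Fin 2) K => p ^ 2 + X 1)^[n] (X 0)) from sq _]
    simp [pderiv_mul, ih]
    have := evalA K n c
    simp only [Pn, Fn] at this
    rw [this]; ring

lemma evalC (K : Type*) [Field K] (N : ℕ) (hN : 1 ≤ N) (c : K) :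
    MvPolynomial.eval ![(0:K), c] (pderiv 0 (Fn K N)) = 0 := by
  induction N with
  | zero => omega
  | succ n ih =>
    simp only [Fn, Function.iterate_succ_apply'] at *
    rw [show ((fun p : MvPolynomial (Fin 2) K => p ^ 2 + X 1)^[n] (X 0)) ^ 2
        = ((fun p : MvPolynomial (Fin 2) K => p ^ 2 + X 1)^[n] (X 0)) *
          ((fun p : MvPolynomial (Fin 2) K => p ^ 2 + X 1)^[n] (X 0)) from sq _]
    rcases Nat.eq_or_lt_of_le hN with h | h
    · -- n = 0
      have : n = 0 := by omega
      subst this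
      simp [pderiv_mul]
    · have := ih (by omega)
      simp [pderiv_mul, this]

lemma monicP (K : Type*) [Field K] (N : ℕ) (hN : 1 ≤ N) :
    (Pn K N).Monic ∧ (Pn K N).natDegree = 2 ^ (N - 1) := by
  unfold Pn
  induction N with
  | zero => omega
  | succ n ih =>
    rcases Nat.eq_or_lt_of_le hN with h | h
    · have : n = 0 := by omega
      subst this
      simp [Polynomial.monic_X]
    · obtain ⟨hm, hd⟩ := ih (by omega)
      set Q := (fun p : Polynomial K => p ^ 2 + Polynomial.X)^[n] 0 with hQ
      have step : (fun p : Polynomial K => p ^ 2 + Polynomial.X)^[n+1] 0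
          = Q ^ 2 + Polynomial.X := Function.iterate_succ_apply' _ _ _
      rw [step]
      have hd2 : (Q ^ 2).natDegree = 2 ^ n := by
        rw [Polynomial.natDegree_pow, hd, ← pow_succ']
        congr 1; omega
      have hX : (Polynomial.X : Polynomial K).natDegree < (Q ^ 2).natDegree := by
        rw [Polynomial.natDegree_X, hd2]
        have : 1 ≤ n := by omega
        calc 1 < 2 ^ 1 := by norm_num
          _ ≤ 2 ^ n := Nat.pow_le_pow_right (by norm_num) this
      constructor
      · exact (hm.pow 2).add_of_left (Polynomial.degree_lt_degree hX)
      · rw [Polynomial.natDegree_add_eq_left_of_natDegree_lt hX, hd2]; congr 1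

/-- If `Pre(N,a)` is nonsingular for some `N ≥ 2`, then the polynomial `f_c^N(0) - a ∈ K[c]`
is separable: it has exactly `2^{N-1}` distinct roots in `K`. -/
theorem iterate_at_zero_separable {K : Type*} [Field K] [IsAlgClosed K] [DecidableEq K]
    (hchar : (2 : K) ≠ 0) (a : K) (N : ℕ) (hN : 2 ≤ N)
    (hns : ∀ x c : K,
      MvPolynomial.eval ![x, c]
          ((fun p : MvPolynomial (Fin 2) K => p ^ 2 + X 1)^[N] (X 0)) = a →
      ¬(MvPolynomial.eval ![x, c] (pderiv 0
            ((fun p : MvPolynomial (Fin 2) K => p ^ 2 + X 1)^[N] (X 0))) = 0 ∧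
        MvPolynomial.eval ![x, c] (pderiv 1
            ((fun p : MvPolynomial (Fin 2) K => p ^ 2 + X 1)^[N] (X 0))) = 0)) :
    ((fun p : Polynomial K => p ^ 2 + Polynomial.X)^[N] 0 - Polynomial.C a).Separable ∧
    ((fun p : Polynomial K => p ^ 2 + Polynomial.X)^[N] 0 -
        Polynomial.C a).roots.toFinset.card = 2 ^ (N - 1) := by
  have hN1 : 1 ≤ N := by omega
  obtain ⟨hm, hdP⟩ := monicP K N hN1
  show (Pn K N - Polynomial.C a).Separable ∧
    (Pn K N - Polynomial.C a).roots.toFinset.card = 2 ^ (N - 1)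
  set g : Polynomial K := Pn K N - Polynomial.C a with hg
  have hdeg : g.natDegree = 2 ^ (N - 1) := by
    rw [hg, Polynomial.natDegree_sub_C, hdP]
  have hg0 : g ≠ 0 := by
    intro h0
    rw [h0, Polynomial.natDegree_zero] at hdeg
    have : (0:ℕ) < 2 ^ (N-1) := Nat.pow_pos (by norm_num)
    omega
  have hder : Polynomial.derivative g = Polynomial.derivative (Pn K N) := by
    rw [hg]; simp
  have hsep : g.Separable := by
    rw [Polynomial.Separable]
    by_contra hcop
    have hgcdu : ¬ IsUnit (EuclideanDomain.gcd g (Polynomial.derivative g)) := by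
      intro h; exact hcop (EuclideanDomain.gcd_isUnit_iff.mp h)
    have hgcd0 : EuclideanDomain.gcd g (Polynomial.derivative g) ≠ 0 := by
      intro h
      exact hg0 (EuclideanDomain.gcd_eq_zero_iff.mp h).1
    have hdeg' : (EuclideanDomain.gcd g (Polynomial.derivative g)).degree ≠ 0 := by
      intro h
      exact hgcdu (Polynomial.isUnit_iff_degree_eq_zero.mpr h)
    obtain ⟨z, hz⟩ := IsAlgClosed.exists_root _ hdeg'
    have hzg : g.eval z = 0 :=
      Polynomial.eval_eq_zero_of_dvd_of_eval_eq_zero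
        (EuclideanDomain.gcd_dvd_left _ _) (by rwa [Polynomial.IsRoot] at hz)
    have hzg' : (Polynomial.derivative g).eval z = 0 :=
      Polynomial.eval_eq_zero_of_dvd_of_eval_eq_zero
        (EuclideanDomain.gcd_dvd_right _ _) (by rwa [Polynomial.IsRoot] at hz)
    have heval : MvPolynomial.eval ![(0:K), z] (Fn K N) = a := by
      rw [← evalA]
      have : (Pn K N).eval z - a = 0 := by
        simpa [hg] using hzg
      exact sub_eq_zero.mp this
    refine hns 0 z heval ⟨evalC K N hN1 z, ?_⟩
    have hB := evalB K N z
    unfold Fn at hB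
    rw [← hB, ← hder]
    exact hzg'
  refine ⟨hsep, ?_⟩
  have hnodup : g.roots.Nodup := Polynomial.nodup_roots hsep
  rw [Multiset.toFinset_card_of_nodup hnodup]
  have hsplit : g.Splits := IsAlgClosed.splits g
  rw [(Polynomial.splits_iff_card_roots).mp hsplit, hdeg]
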